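/- Under the same setting, with p*_X(p̂_{X|Y})(x) = [ Σ_y p̂_{X|Y}(x|y)^{−ρ} W(y|x) e^{ρν c(x)} ]^{−1/ρ} / Σ_{x'} [ Σ_y p̂_{X|Y}(x'|y)^{−ρ} W(y|x') e^{ρν c(x')} ]^{−1/ρ}, we have F_AR^{(ρ,ν)}(p_X, p̂_{X|Y}|W) = (1/ρ) A^{(ρ,ν)}(p̂_{X|Y}|W) − D_{1+ρ}( p_X ‖ p*_X(p̂_{X|Y}) ), where D_{1+ρ}(p ‖ q) = (1/ρ) log Σ_x p(x)^{1+ρ} q(x)^{−ρ} is the Rényi divergence of order 1+ρ and A^{(ρ,ν)}(p̂_{X|Y}|W) = ρ log Σ_x e^{−ν c(x)} [ Σ_y p̂_{X|Y}(x|y)^{−ρ} W(y|x) ]^{−1/ρ}. -/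

import Mathlib

open Finset Real

theorem stmt_6 {X Y : Type*} [Fintype X] [Fintype Y]
    (W : X → Y → ℝ) (hW0 : ∀ x y, 0 ≤ W x y) (hW1 : ∀ x, ∑ y, W x y = 1)
    (c : X → ℝ) (hc : ∀ x, 0 ≤ c x)
    (rho : ℝ) (hrho1 : -1 < rho) (hrho2 : rho ≤ 1) (hrho3 : rho ≠ 0)
    (nu : ℝ) (hnu : 0 ≤ nu)
    (p : X → ℝ) (hp0 : ∀ x, 0 < p x) (hp1 : ∑ x, p x = 1)
    (phat : X → Y → ℝ) (hphat0 : ∀ x y, 0 < phat x y)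
    (hphat1 : ∀ y, ∑ x, phat x y = 1) :
    let FAR : ℝ := -(1 / rho) * Real.log (∑ x, ∑ y,
      (p x) ^ (1 + rho) * (phat x y) ^ (-rho) * W x y * Real.exp (rho * nu * c x))
    let A : ℝ := rho * Real.log (∑ x, Real.exp (-(nu * c x)) *
      (∑ y, (phat x y) ^ (-rho) * W x y) ^ (-(1 : ℝ) / rho))
    let pstar : X → ℝ := fun x =>
      (∑ y, (phat x y) ^ (-rho) * W x y * Real.exp (rho * nu * c x)) ^ (-(1 : ℝ) / rho) /
        (∑ x', (∑ y, (phat x' y) ^ (-rho) * W x' y * Real.exp (rho * nu * c x')) ^ (-(1 : ℝ) / rho))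
    let renyi : ℝ := (1 / rho) * Real.log (∑ x, (p x) ^ (1 + rho) * (pstar x) ^ (-rho))
    FAR = (1 / rho) * A - renyi := by
  intro FAR A pstar renyi
  -- Notation
  set S : X → ℝ := fun x => ∑ y, (phat x y) ^ (-rho) * W x y * Real.exp (rho * nu * c x)
    with hSdef
  set T : X → ℝ := fun x => ∑ y, (phat x y) ^ (-rho) * W x y with hTdef
  have hS : ∀ x, 0 < S x := by
    intro x
    have hy : ∃ y, 0 < W x y := by
      by_contra h
      push_neg at h
      have h1 : ∑ y, W x y ≤ 0 := Finset.sum_nonpos fun y _ => h y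
      rw [hW1 x] at h1; linarith
    obtain ⟨y, hy⟩ := hy
    apply Finset.sum_pos'
    · intro i _
      exact mul_nonneg (mul_nonneg (Real.rpow_pos_of_pos (hphat0 x i) _).le (hW0 x i))
        (Real.exp_pos _).le
    · exact ⟨y, Finset.mem_univ y,
        mul_pos (mul_pos (Real.rpow_pos_of_pos (hphat0 x y) _) hy) (Real.exp_pos _)⟩
  have hT : ∀ x, 0 < T x := by
    intro x
    have := hS x
    have hST : S x = Real.exp (rho * nu * c x) * T x := by
      simp only [hSdef, hTdef, Finset.mul_sum]
      exact Finset.sum_congr rfl fun y _ => by ring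
    nlinarith [Real.exp_pos (rho * nu * c x), this, hST]
  have hXne : (Finset.univ : Finset X).Nonempty := by
    by_contra h
    rw [Finset.not_nonempty_iff_eq_empty] at h
    rw [h, Finset.sum_empty] at hp1
    norm_num at hp1
  set Z : ℝ := ∑ x, S x ^ (-(1 : ℝ) / rho) with hZdef
  have hZ : 0 < Z := Finset.sum_pos (fun x _ => Real.rpow_pos_of_pos (hS x) _) hXne
  set E : ℝ := ∑ x, (p x) ^ (1 + rho) * S x with hEdef
  have hE : 0 < E := Finset.sum_pos (fun x _ =>
    mul_pos (Real.rpow_pos_of_pos (hp0 x) _) (hS x)) hXne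
  -- FAR = -(1/rho) * log E
  have hFAR : FAR = -(1 / rho) * Real.log E := by
    have : (∑ x, ∑ y,
        (p x) ^ (1 + rho) * (phat x y) ^ (-rho) * W x y * Real.exp (rho * nu * c x)) = E := by
      simp only [hEdef, hSdef, Finset.mul_sum]
      exact Finset.sum_congr rfl fun x _ => Finset.sum_congr rfl fun y _ => by ring
    simp only [FAR, this]
  -- A = rho * log Z
  have hA : A = rho * Real.log Z := by
    have key : ∀ x, Real.exp (-(nu * c x)) * (T x) ^ (-(1 : ℝ) / rho)
        = S x ^ (-(1 : ℝ) / rho) := by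
      intro x
      have hST : S x = Real.exp (rho * nu * c x) * T x := by
        simp only [hSdef, hTdef, Finset.mul_sum]
        exact Finset.sum_congr rfl fun y _ => by ring
      rw [hST, Real.mul_rpow (Real.exp_pos _).le (hT x).le, ← Real.exp_mul]
      congr 2
      field_simp
    simp only [A, hZdef]
    congr 1
    exact congrArg Real.log (Finset.sum_congr rfl fun x _ => key x)
  -- pstar x ^ (-rho) = S x * Z ^ rho
  have hpstar : ∀ x, pstar x ^ (-rho) = S x * Z ^ rho := by
    intro x
    have h1 : pstar x = S x ^ (-(1 : ℝ) / rho) / Z := rfl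
    have h2 : -(1 : ℝ) / rho * -rho = 1 := by field_simp
    rw [h1, Real.div_rpow (Real.rpow_pos_of_pos (hS x) _).le hZ.le,
      ← Real.rpow_mul (hS x).le, h2, Real.rpow_one, Real.rpow_neg hZ.le, div_inv_eq_mul]
  -- renyi = log Z + (1/rho) * log E
  have hrenyi : renyi = Real.log Z + (1 / rho) * Real.log E := by
    have h1 : (∑ x, (p x) ^ (1 + rho) * (pstar x) ^ (-rho)) = Z ^ rho * E := by
      simp only [hEdef, Finset.mul_sum]
      refine Finset.sum_congr rfl fun x _ => ?_
      rw [hpstar x]; ring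
    simp only [renyi, h1]
    rw [Real.log_mul (Real.rpow_pos_of_pos hZ _).ne' hE.ne', Real.log_rpow hZ]
    field_simp
  rw [hFAR, hA, hrenyi]
  field_simp
  ring
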